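/- Let l be a list of pairwise independent STRIPS actions over L (each action occurring at most once) and let s be a state with pre(a) ⊆ s for every action a in l. Then the sequential execution of l from s is applicable at every step: for every decomposition l = l₁ ++ (a :: l₂), the action a is applicable in the state obtained by folding γ over l₁ starting from s. -/

import Mathlib

namespace STRIPS

/-- A STRIPS action over a type `L` of logical propositions. -/
structure Action (L : Type*) where
  pre : Set L
  add : Set L
  del : Set L

/-- Applying an action `a` to a state `s`: `γ(s, a) = (s \ del(a)) ∪ add(a)`. -/
def gamma {L : Type*} (s : Set L) (a : Action L) : Set L :=
  (s \ a.del) ∪ a.add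

/-- Two actions are independent iff `del(a) ∩ (pre(b) ∪ add(b)) = ∅`
and `del(b) ∩ (pre(a) ∪ add(a)) = ∅`. -/
def Indep {L : Type*} (a b : Action L) : Prop :=
  a.del ∩ (b.pre ∪ b.add) = ∅ ∧ b.del ∩ (a.pre ∪ a.add) = ∅

/-- Let `l` be a list of pairwise independent actions (each occurring at
most once), and let `s` be a state with `pre(a) ⊆ s` for every `a` in `l`.
Then the sequential execution of `l` from `s` is applicable at every step:
for every decomposition `l = l₁ ++ (a :: l₂)`, the action `a` is applicable
in the state obtained by folding `γ` over `l₁` starting from `s`. -/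
theorem seq_exec_applicable {L : Type*} (l : List (Action L))
    (hnodup : l.Nodup)
    (hind : ∀ a ∈ l, ∀ b ∈ l, a ≠ b → Indep a b)
    (s : Set L) (hpre : ∀ a ∈ l, a.pre ⊆ s) :
    ∀ (l₁ : List (Action L)) (a : Action L) (l₂ : List (Action L)),
      l = l₁ ++ a :: l₂ → a.pre ⊆ l₁.foldl gamma s := by
  -- auxiliary claim: preservation of a.pre along a fold of actions whose
  -- deletes are disjoint from a.pre
  have key : ∀ (l₁ : List (Action L)) (a : Action L) (s : Set L),
      a.pre ⊆ s → (∀ b ∈ l₁, b.del ∩ a.pre = ∅) → a.pre ⊆ l₁.foldl gamma s := by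
    intro l₁
    induction l₁ with
    | nil => intro a s hs _; simpa using hs
    | cons b t ih =>
      intro a s hs hdis
      simp only [List.foldl_cons]
      apply ih
      · intro x hx
        left
        refine ⟨hs hx, fun hxd => ?_⟩
        have : x ∈ b.del ∩ a.pre := ⟨hxd, hx⟩
        rw [hdis b List.mem_cons_self] at this
        exact this
      · intro c hc
        exact hdis c (List.mem_cons_of_mem b hc)
  intro l₁ a l₂ hl
  subst hl
  have ha : a ∈ l₁ ++ a :: l₂ := by simp
  apply key l₁ a s (hpre a ha)
  intro b hb
  have hbmem : b ∈ l₁ ++ a :: l₂ := List.mem_append_left _ hb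
  have hne : b ≠ a := by
    rintro rfl
    exact (List.disjoint_of_nodup_append hnodup) hb (by simp)
  have h2 := (hind a ha b hbmem hne.symm).2
  -- h2 : b.del ∩ (a.pre ∪ a.add) = ∅
  apply Set.eq_empty_of_subset_empty
  intro x ⟨hx1, hx2⟩
  have : x ∈ b.del ∩ (a.pre ∪ a.add) := ⟨hx1, Or.inl hx2⟩
  rw [h2] at this
  exact this

end STRIPS
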